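/- In Ãₙ with gⱼ = pⱼ⁻¹p_{j+1}: (i) a_k gⱼ = gⱼ a_k whenever k ∉ {j−1, j, j+1} (mod n+1); (ii) a_{i−1} gᵢ = g_{i−1} gᵢ a_{i−1}; (iii) aᵢ gᵢ = gᵢ⁻¹ aᵢ; (iv) a_{i+1} gᵢ = gᵢ g_{i+1} a_{i+1}, all indices mod n+1. -/

import Mathlib

open CoxeterMatrix

/-- The affine Coxeter matrix of type Ãₙ on the cyclic index set `ZMod (n+1)`:
`aᵢ² = 1`, `(aᵢa_{i+1})³ = 1`, and non-adjacent generators (mod n+1) commute. -/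
def affineA (n : ℕ) : CoxeterMatrix (ZMod (n + 1)) where
  M := fun i j => if i = j then 1 else if i = j + 1 ∨ j = i + 1 then 3 else 2
  isSymm := by
    ext i j
    by_cases h : i = j
    · simp [Matrix.transpose, h]
    · simp only [Matrix.transpose, Matrix.of_apply]
      rw [if_neg h, if_neg (Ne.symm h)]
      exact if_congr or_comm rfl rfl
  diagonal := fun i => by simp
  off_diagonal := fun i j h => by
    simp only [if_neg h]
    split <;> simp

/-- The Coxeter generators `aᵢ` of `Ãₙ`. -/
def aa (n : ℕ) (i : ZMod (n + 1)) : (affineA n).Group := (affineA n).simple i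

/-- The cyclic products `pⱼ = a_{j+1} a_{j+2} ⋯ a_{j-1}` (indices mod `n+1`). -/
def pp (n : ℕ) (j : ZMod (n + 1)) : (affineA n).Group :=
  ((List.range n).map fun k => aa n (j + 1 + (k : ℕ))).prod

/-- `gⱼ = pⱼ⁻¹ p_{j+1}`. -/
def gg (n : ℕ) (j : ZMod (n + 1)) : (affineA n).Group := (pp n j)⁻¹ * pp n (j + 1)

/-- The subgroup `N = ⟨pⱼ⁻¹pᵢ : i, j⟩` of `Ãₙ`. -/
def NN (n : ℕ) : Subgroup (affineA n).Group :=
  Subgroup.closure {x | ∃ i j : ZMod (n + 1), x = (pp n j)⁻¹ * pp n i}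

/-- The standard parabolic subgroup `⟨a₁,…,aₙ⟩` of `Ãₙ` (all generators except `a_{n+1} = a₀`). -/
def parab (n : ℕ) : Subgroup (affineA n).Group :=
  Subgroup.closure {x | ∃ i : ZMod (n + 1), i ≠ 0 ∧ x = aa n i}

/- ## auxiliary lemmas -/

lemma aa_mul_self (n : ℕ) (i : ZMod (n + 1)) : aa n i * aa n i = 1 :=
  (affineA n).toCoxeterSystem.simple_mul_simple_self i

lemma aa_inv (n : ℕ) (i : ZMod (n + 1)) : (aa n i)⁻¹ = aa n i :=
  (affineA n).toCoxeterSystem.inv_simple i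

lemma aa_comm (n : ℕ) {i j : ZMod (n + 1)} (h0 : i ≠ j) (h1 : i ≠ j + 1) (h2 : j ≠ i + 1) :
    aa n i * aa n j = aa n j * aa n i := by
  have hM : (affineA n).M i j = 2 := by
    show (if i = j then 1 else if i = j + 1 ∨ j = i + 1 then 3 else 2) = 2
    rw [if_neg h0, if_neg (by tauto)]
  have h := (affineA n).toCoxeterSystem.simple_mul_simple_pow i j
  rw [hM, sq] at h
  have : aa n i * aa n j = (aa n i * aa n j)⁻¹ := eq_inv_of_mul_eq_one_left h
  rw [this, mul_inv_rev, aa_inv, aa_inv]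

lemma aa_braid (n : ℕ) (h1 : (1 : ZMod (n + 1)) ≠ 0) (i : ZMod (n + 1)) :
    aa n i * aa n (i + 1) * aa n i = aa n (i + 1) * aa n i * aa n (i + 1) := by
  have hne : i ≠ i + 1 := by
    intro h
    have h' : i + 1 = i + 0 := by rw [add_zero, ← h]
    exact h1 (add_left_cancel h')
  have hM : (affineA n).M i (i + 1) = 3 := by
    show (if i = i + 1 then 1 else if i = i + 1 + 1 ∨ i + 1 = i + 1 then 3 else 2) = 3
    rw [if_neg hne, if_pos (Or.inr rfl)]
  have h := (affineA n).toCoxeterSystem.simple_mul_simple_pow i (i + 1)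
  rw [hM] at h
  have h3 : (aa n i * aa n (i + 1) * aa n i) * (aa n (i + 1) * aa n i * aa n (i + 1)) = 1 := by
    have e : (aa n i * aa n (i + 1) * aa n i) * (aa n (i + 1) * aa n i * aa n (i + 1))
        = (aa n i * aa n (i + 1)) ^ 3 := by
      simp only [pow_succ, pow_zero, one_mul, mul_assoc]
    rw [e]; exact h
  have e2 : aa n i * aa n (i + 1) * aa n i
      = (aa n (i + 1) * aa n i * aa n (i + 1))⁻¹ := eq_inv_of_mul_eq_one_left h3
  rw [e2, mul_inv_rev, mul_inv_rev, aa_inv, aa_inv, mul_assoc]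

lemma cast_ne (n : ℕ) {a b : ℕ} (ha : a < n + 1) (hb : b < n + 1) (hab : a ≠ b) :
    (a : ZMod (n + 1)) ≠ (b : ZMod (n + 1)) := by
  intro h
  apply hab
  have h2 := congrArg ZMod.val h
  rwa [ZMod.val_cast_of_lt ha, ZMod.val_cast_of_lt hb] at h2

lemma aa_comm' (n : ℕ) {x y : ZMod (n + 1)} (d : ℕ) (hd : 2 ≤ d) (hd2 : d ≤ n - 1)
    (hn : 2 ≤ n) (h : y = x + (d : ZMod (n + 1))) :
    aa n x * aa n y = aa n y * aa n x := by
  apply aa_comm n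
  · intro h'
    refine cast_ne n (a := d) (b := 0) (by omega) (by omega) (by omega) ?_
    push_cast
    rw [h'] at h
    linear_combination -h
  · intro h'
    refine cast_ne n (a := d + 1) (b := 0) (by omega) (by omega) (by omega) ?_
    push_cast
    rw [h'] at h
    linear_combination -h
  · intro h'
    refine cast_ne n (a := d) (b := 1) (by omega) (by omega) (by omega) ?_
    push_cast
    rw [h'] at h
    linear_combination -h

lemma ppA (n : ℕ) (j : ZMod (n + 1)) : pp n j * aa n j = aa n (j + 1) * pp n (j + 1) := by
  have hL : pp n j * aa n j
      = ((List.range (n + 1)).map (fun k : ℕ => aa n (j + 1 + (k : ℕ)))).prod := by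
    rw [List.range_succ, List.map_append, List.prod_append]
    simp only [List.map_cons, List.map_nil, List.prod_cons, List.prod_nil, mul_one]
    have hidx : j + 1 + ((n : ℕ) : ZMod (n + 1)) = j := by
      have h0 : (((n + 1 : ℕ)) : ZMod (n + 1)) = 0 := ZMod.natCast_self (n + 1)
      push_cast at h0
      linear_combination h0
    rw [hidx]
    rfl
  have hR : aa n (j + 1) * pp n (j + 1)
      = ((List.range (n + 1)).map (fun k : ℕ => aa n (j + 1 + (k : ℕ)))).prod := by
    simp only [List.range_succ_eq_map, List.map_cons, List.prod_cons, List.map_map,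
      Nat.cast_zero, add_zero]
    have hfun : ((fun k : ℕ => aa n (j + 1 + (k : ℕ))) ∘ Nat.succ)
        = fun k : ℕ => aa n (j + 1 + 1 + (k : ℕ)) := by
      funext k
      simp only [Function.comp_apply]
      congr 1
      push_cast
      ring
    rw [hfun]
    rfl
  rw [hL, hR]

lemma aa_mul_pp (n : ℕ) (hn : 2 ≤ n) {k j : ZMod (n + 1)} (h0 : k ≠ j) (h1 : k ≠ j + 1) :
    aa n k * pp n j = pp n j * aa n (k - 1) := by
  have hone : (1 : ZMod (n + 1)) ≠ 0 := by
    have := cast_ne n (a := 1) (b := 0) (by omega) (by omega) (by omega)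
    push_cast at this
    exact this
  have hmlt : (k - j).val < n + 1 := ZMod.val_lt _
  have hmcast : (((k - j).val : ℕ) : ZMod (n + 1)) = k - j := by
    rw [ZMod.natCast_val, ZMod.cast_id]
  have hm0 : (k - j).val ≠ 0 := by
    intro h
    apply h0
    rw [h] at hmcast
    push_cast at hmcast
    linear_combination -hmcast
  have hm1 : (k - j).val ≠ 1 := by
    intro h
    apply h1
    rw [h] at hmcast
    push_cast at hmcast
    linear_combination -hmcast
  obtain ⟨m', hm'⟩ : ∃ m', (k - j).val = m' + 2 := ⟨(k - j).val - 2, by omega⟩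
  have hm'n : m' + 2 ≤ n := by omega
  have hk : k = j + ((m' + 2 : ℕ) : ZMod (n + 1)) := by
    rw [← hm', hmcast]
    ring
  have hk1 : k - 1 = j + 1 + ((m' : ℕ) : ZMod (n + 1)) := by
    rw [hk]; push_cast; ring
  -- split the product
  have hsplit : pp n j
      = ((List.range' 0 m').map (fun i : ℕ => aa n (j + 1 + (i : ℕ)))).prod *
        (aa n (k - 1) * (aa n k *
          ((List.range' (m' + 2) (n - (m' + 2))).map (fun i : ℕ => aa n (j + 1 + (i : ℕ)))).prod)) := by
    have e1 : List.range' m' 2 ++ List.range' (m' + 2) (n - (m' + 2)) = List.range' m' (n - m') := by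
      rw [List.range'_append_1]
      congr 1
      omega
    have e2 : List.range' 0 m' ++ List.range' m' (n - m') = List.range' 0 n := by
      have h : List.range' 0 m' ++ List.range' (0 + m') (n - m') = List.range' 0 (m' + (n - m')) :=
        List.range'_append_1
      rw [Nat.zero_add] at h
      rw [h]
      congr 1
      omega
    have e3 : List.range n = List.range' 0 m' ++ (List.range' m' 2 ++ List.range' (m' + 2) (n - (m' + 2))) := by
      rw [e1, e2, List.range_eq_range']
    show ((List.range n).map fun i : ℕ => aa n (j + 1 + (i : ℕ))).prod = _
    rw [e3, List.map_append, List.prod_append, List.map_append, List.prod_append]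
    have e4 : List.range' m' 2 = [m', m' + 1] := rfl
    rw [e4]
    simp only [List.map_cons, List.map_nil, List.prod_cons, List.prod_nil, mul_one, mul_assoc]
    congr 2
    · congr 1
      rw [hk1]
    · congr 2
      · congr 1
        rw [hk]
        push_cast
        ring
  -- commutation with the two outer chunks
  have hcomm1 : Commute (aa n k)
      (((List.range' 0 m').map (fun i : ℕ => aa n (j + 1 + (i : ℕ)))).prod) := by
    apply Commute.list_prod_right
    intro x hx
    simp only [List.mem_map] at hx
    obtain ⟨i, hi, rfl⟩ := hx
    have hi' : i < m' := by
      have := List.mem_range'_1.mp hi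
      omega
    obtain ⟨d, hd⟩ : ∃ d : ℕ, i + d = m' + 1 := ⟨m' + 1 - i, by omega⟩
    have hdc : ((i : ℕ) : ZMod (n + 1)) + ((d : ℕ) : ZMod (n + 1)) = ((m' + 1 : ℕ) : ZMod (n + 1)) := by
      rw [← Nat.cast_add, hd]
    exact (aa_comm' n d (by omega) (by omega) hn
      (by rw [hk]; push_cast at hdc ⊢; linear_combination -hdc)).symm
  have hcomm3 : Commute (aa n (k - 1))
      (((List.range' (m' + 2) (n - (m' + 2))).map (fun i : ℕ => aa n (j + 1 + (i : ℕ)))).prod) := by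
    apply Commute.list_prod_right
    intro x hx
    simp only [List.mem_map] at hx
    obtain ⟨i, hi, rfl⟩ := hx
    have hi' : m' + 2 ≤ i ∧ i < n := by
      have := List.mem_range'_1.mp hi
      omega
    obtain ⟨d, hd⟩ : ∃ d : ℕ, m' + d = i := ⟨i - m', by omega⟩
    have hdc : ((m' : ℕ) : ZMod (n + 1)) + ((d : ℕ) : ZMod (n + 1)) = ((i : ℕ) : ZMod (n + 1)) := by
      rw [← Nat.cast_add, hd]
    exact aa_comm' n d (by omega) (by omega) hn
      (by rw [hk1]; push_cast at hdc ⊢; linear_combination -hdc)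
  have hb := aa_braid n hone (k - 1)
  rw [sub_add_cancel] at hb
  calc aa n k * pp n j
      = (aa n k * ((List.range' 0 m').map (fun i : ℕ => aa n (j + 1 + (i : ℕ)))).prod) *
        (aa n (k - 1) * (aa n k *
          ((List.range' (m' + 2) (n - (m' + 2))).map (fun i : ℕ => aa n (j + 1 + (i : ℕ)))).prod)) := by
        rw [hsplit, mul_assoc]
    _ = (((List.range' 0 m').map (fun i : ℕ => aa n (j + 1 + (i : ℕ)))).prod * aa n k) *
        (aa n (k - 1) * (aa n k *
          ((List.range' (m' + 2) (n - (m' + 2))).map (fun i : ℕ => aa n (j + 1 + (i : ℕ)))).prod)) := by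
        rw [hcomm1.eq]
    _ = ((List.range' 0 m').map (fun i : ℕ => aa n (j + 1 + (i : ℕ)))).prod *
        ((aa n k * aa n (k - 1) * aa n k) *
          ((List.range' (m' + 2) (n - (m' + 2))).map (fun i : ℕ => aa n (j + 1 + (i : ℕ)))).prod) := by
        simp only [mul_assoc]
    _ = ((List.range' 0 m').map (fun i : ℕ => aa n (j + 1 + (i : ℕ)))).prod *
        ((aa n (k - 1) * aa n k * aa n (k - 1)) *
          ((List.range' (m' + 2) (n - (m' + 2))).map (fun i : ℕ => aa n (j + 1 + (i : ℕ)))).prod) := by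
        rw [hb]
    _ = ((List.range' 0 m').map (fun i : ℕ => aa n (j + 1 + (i : ℕ)))).prod *
        (aa n (k - 1) * (aa n k * (aa n (k - 1) *
          ((List.range' (m' + 2) (n - (m' + 2))).map (fun i : ℕ => aa n (j + 1 + (i : ℕ)))).prod))) := by
        simp only [mul_assoc]
    _ = ((List.range' 0 m').map (fun i : ℕ => aa n (j + 1 + (i : ℕ)))).prod *
        (aa n (k - 1) * (aa n k *
          (((List.range' (m' + 2) (n - (m' + 2))).map (fun i : ℕ => aa n (j + 1 + (i : ℕ)))).prod *
            aa n (k - 1)))) := by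
        rw [hcomm3.eq]
    _ = pp n j * aa n (k - 1) := by
        rw [hsplit]
        simp only [mul_assoc]

lemma aa_mul_pp_inv (n : ℕ) (hn : 2 ≤ n) {m j : ZMod (n + 1)} (h0 : m ≠ j - 1) (h1 : m ≠ j) :
    aa n m * (pp n j)⁻¹ = (pp n j)⁻¹ * aa n (m + 1) := by
  have hne1 : m + 1 ≠ j := fun h => h0 (by linear_combination h)
  have hne2 : m + 1 ≠ j + 1 := fun h => h1 (by linear_combination h)
  have h := aa_mul_pp n hn hne1 hne2
  rw [add_sub_cancel_right] at h
  calc aa n m * (pp n j)⁻¹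
      = (pp n j)⁻¹ * (pp n j * aa n m) * (pp n j)⁻¹ := by rw [inv_mul_cancel_left]
    _ = (pp n j)⁻¹ * (aa n (m + 1) * pp n j) * (pp n j)⁻¹ := by rw [← h]
    _ = (pp n j)⁻¹ * aa n (m + 1) := by rw [mul_assoc, mul_inv_cancel_right]

lemma ppA_inv (n : ℕ) (i : ZMod (n + 1)) :
    aa n i * (pp n i)⁻¹ = (pp n (i + 1))⁻¹ * aa n (i + 1) := by
  have h := congrArg (fun x => x⁻¹) (ppA n i)
  simp only [mul_inv_rev, aa_inv] at h
  exact h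

lemma ppA' (n : ℕ) (j : ZMod (n + 1)) :
    aa n (j + 1) * pp n j = pp n (j + 1) * aa n j := by
  have h := ppA n j
  calc aa n (j + 1) * pp n j
      = aa n (j + 1) * (pp n j * aa n j) * aa n j := by
        conv_rhs => rw [mul_assoc, mul_assoc, aa_mul_self, mul_one]
    _ = aa n (j + 1) * (aa n (j + 1) * pp n (j + 1)) * aa n j := by rw [h]
    _ = pp n (j + 1) * aa n j := by
        rw [← mul_assoc, aa_mul_self, one_mul]


/-- Commutation relations between the generators `a_k` and the elements `gⱼ = pⱼ⁻¹p_{j+1}`. -/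
theorem stmt11 (n : ℕ) (hn : 2 ≤ n) :
    (∀ k j : ZMod (n + 1), k ≠ j - 1 → k ≠ j → k ≠ j + 1 →
      aa n k * gg n j = gg n j * aa n k) ∧
    (∀ i : ZMod (n + 1), aa n (i - 1) * gg n i = gg n (i - 1) * gg n i * aa n (i - 1)) ∧
    (∀ i : ZMod (n + 1), aa n i * gg n i = (gg n i)⁻¹ * aa n i) ∧
    (∀ i : ZMod (n + 1), aa n (i + 1) * gg n i = gg n i * gg n (i + 1) * aa n (i + 1)) := by
  have hone : (1 : ZMod (n + 1)) ≠ 0 := by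
    have := cast_ne n (a := 1) (b := 0) (by omega) (by omega) (by omega)
    push_cast at this
    exact this
  have htwo : (2 : ZMod (n + 1)) ≠ 0 := by
    have := cast_ne n (a := 2) (b := 0) (by omega) (by omega) (by omega)
    push_cast at this
    exact this
  refine ⟨?_, ?_, ?_, ?_⟩
  · intro k j hkm hk0 hkp
    have hc1 : k + 1 ≠ j + 1 := fun h => hk0 (add_right_cancel h)
    have hc2 : k + 1 ≠ j + 1 + 1 := fun h => hkp (add_right_cancel h)
    unfold gg
    calc aa n k * ((pp n j)⁻¹ * pp n (j + 1))
        = (aa n k * (pp n j)⁻¹) * pp n (j + 1) := by rw [mul_assoc]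
      _ = ((pp n j)⁻¹ * aa n (k + 1)) * pp n (j + 1) := by
          rw [aa_mul_pp_inv n hn hkm hk0]
      _ = (pp n j)⁻¹ * (aa n (k + 1) * pp n (j + 1)) := by rw [mul_assoc]
      _ = (pp n j)⁻¹ * (pp n (j + 1) * aa n (k + 1 - 1)) := by
          rw [aa_mul_pp n hn hc1 hc2]
      _ = (pp n j)⁻¹ * pp n (j + 1) * aa n k := by rw [add_sub_cancel_right, mul_assoc]
  · intro i
    have hne1 : i ≠ i + 1 := fun h => hone (by linear_combination -h)
    have hne2 : i ≠ i + 1 + 1 := fun h => htwo (by linear_combination -h)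
    have key : aa n i * pp n (i + 1) = pp n (i + 1) * aa n (i - 1) := by
      have h := aa_mul_pp n hn hne1 hne2
      exact h
    have h2 := ppA n (i - 1)
    rw [sub_add_cancel] at h2
    unfold gg
    rw [sub_add_cancel]
    apply mul_left_cancel (a := pp n (i - 1))
    calc pp n (i - 1) * (aa n (i - 1) * ((pp n i)⁻¹ * pp n (i + 1)))
        = (pp n (i - 1) * aa n (i - 1)) * ((pp n i)⁻¹ * pp n (i + 1)) := by group
      _ = (aa n i * pp n i) * ((pp n i)⁻¹ * pp n (i + 1)) := by rw [h2]
      _ = aa n i * pp n (i + 1) := by group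
      _ = pp n (i + 1) * aa n (i - 1) := key
      _ = pp n (i - 1) * ((pp n (i - 1))⁻¹ * pp n i * ((pp n i)⁻¹ * pp n (i + 1)) * aa n (i - 1)) := by
          group
  · intro i
    unfold gg
    calc aa n i * ((pp n i)⁻¹ * pp n (i + 1))
        = (aa n i * (pp n i)⁻¹) * pp n (i + 1) := by rw [mul_assoc]
      _ = ((pp n (i + 1))⁻¹ * aa n (i + 1)) * pp n (i + 1) := by rw [ppA_inv]
      _ = (pp n (i + 1))⁻¹ * (aa n (i + 1) * pp n (i + 1)) := by rw [mul_assoc]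
      _ = (pp n (i + 1))⁻¹ * (pp n i * aa n i) := by rw [← ppA]
      _ = ((pp n i)⁻¹ * pp n (i + 1))⁻¹ * aa n i := by group
  · intro i
    have hx : i + 1 ≠ i - 1 := fun h => htwo (by linear_combination h)
    have hy : i + 1 ≠ i := fun h => hone (by linear_combination h)
    have ha := aa_mul_pp_inv n hn hx hy
    have hb' := ppA' n (i + 1)
    unfold gg
    calc aa n (i + 1) * ((pp n i)⁻¹ * pp n (i + 1))
        = (aa n (i + 1) * (pp n i)⁻¹) * pp n (i + 1) := by rw [mul_assoc]
      _ = ((pp n i)⁻¹ * aa n (i + 1 + 1)) * pp n (i + 1) := by rw [ha]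
      _ = (pp n i)⁻¹ * (aa n (i + 1 + 1) * pp n (i + 1)) := by rw [mul_assoc]
      _ = (pp n i)⁻¹ * (pp n (i + 1 + 1) * aa n (i + 1)) := by rw [hb']
      _ = (pp n i)⁻¹ * pp n (i + 1) * ((pp n (i + 1))⁻¹ * pp n (i + 1 + 1)) * aa n (i + 1) := by
          group
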